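/- For any α, β ∈ ℝ and g₀, λ, ρ₀ > 0, there exists ε > 0 and a unique C² solution (f, ρ) of the system f'' − ((f²−1)/r²)f = g₀²ρ²f, ρ'' + (2/r)ρ' − (2f²/r²)ρ = λ(ρ² − ρ₀²)ρ on (0, ε) such that (f(r) − 1 + αr²)/r² → 0 and (ρ(r) − βr)/r → 0 as r → 0⁺. -/

import Mathlib

open Real Set Filter

open Real Set Filter MeasureTheory intervalIntegral Topology



noncomputable def prim (Φ : ℝ → ℝ) (k : ℕ) (r : ℝ) : ℝ := ∫ s in (0:ℝ)..r, s ^ k * Φ s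

noncomputable def pOp (c : ℝ) (Φ : ℝ → ℝ) (r : ℝ) : ℝ :=
  c + (1/3) * prim Φ 1 r - (1/(3*r^3)) * prim Φ 4 r

lemma pOp_zero (c : ℝ) (Φ : ℝ → ℝ) : pOp c Φ 0 = c := by
  simp [pOp, prim]

lemma intInt {Φ : ℝ → ℝ} {b : ℝ} (hΦ : ContinuousOn Φ (Ico 0 b)) (k : ℕ) {r : ℝ}
    (hr : r ∈ Ico 0 b) : IntervalIntegrable (fun s => s ^ k * Φ s) volume 0 r := by
  apply ContinuousOn.intervalIntegrable
  rw [uIcc_of_le hr.1]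
  exact (continuous_pow k).continuousOn.mul
    (hΦ.mono fun s hs => ⟨hs.1, lt_of_le_of_lt hs.2 hr.2⟩)

lemma prim_hasDerivAt {Φ : ℝ → ℝ} {b : ℝ} (hΦ : ContinuousOn Φ (Ico 0 b)) (k : ℕ) {r : ℝ}
    (hr : r ∈ Ioo 0 b) : HasDerivAt (prim Φ k) (r ^ k * Φ r) r := by
  have hco : ContinuousOn (fun s => s ^ k * Φ s) (Ioo 0 b) :=
    (continuous_pow k).continuousOn.mul (hΦ.mono Ioo_subset_Ico_self)
  exact intervalIntegral.integral_hasDerivAt_right (intInt hΦ k ⟨hr.1.le, hr.2⟩)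
    (hco.stronglyMeasurableAtFilter isOpen_Ioo r hr)
    (hco.continuousAt (isOpen_Ioo.mem_nhds hr))

lemma pOp_sub_le {Φ Φ' ξ : ℝ → ℝ} {b r : ℝ} (c : ℝ) (hΦ : ContinuousOn Φ (Ico 0 b))
    (hΦ' : ContinuousOn Φ' (Ico 0 b)) (hξ : ContinuousOn ξ (Ico 0 b)) (hr : r ∈ Ico 0 b)
    (hle : ∀ s ∈ Icc 0 r, |Φ s - Φ' s| ≤ ξ s) :
    |pOp c Φ r - pOp c Φ' r| ≤ ∫ s in (0:ℝ)..r, s * ξ s := by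
  have hξ0 : ∀ s ∈ Icc 0 r, 0 ≤ ξ s := fun s hs => le_trans (abs_nonneg _) (hle s hs)
  have hIξ : IntervalIntegrable (fun s => s * ξ s) volume 0 r := by
    simpa using intInt hξ 1 hr
  rcases eq_or_lt_of_le hr.1 with h0 | h0
  · rw [← h0]; simp [pOp, prim]
  have hI0 : 0 ≤ ∫ s in (0:ℝ)..r, s * ξ s := by
    apply intervalIntegral.integral_nonneg hr.1
    intro s hs
    exact mul_nonneg hs.1 (hξ0 s hs)
  have hd : ∀ k : ℕ, prim Φ k r - prim Φ' k r = ∫ s in (0:ℝ)..r, s ^ k * (Φ s - Φ' s) := by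
    intro k
    rw [prim, prim, ← intervalIntegral.integral_sub (intInt hΦ k hr) (intInt hΦ' k hr)]
    congr 1; funext s; ring
  have habs : ∀ k : ℕ, (∀ s ∈ Icc 0 r, |s ^ k * (Φ s - Φ' s)| ≤ s ^ k * ξ s) := by
    intro k s hs
    rw [abs_mul, abs_pow, abs_of_nonneg hs.1]
    exact mul_le_mul_of_nonneg_left (hle s hs) (pow_nonneg hs.1 k)
  have h1 : |prim Φ 1 r - prim Φ' 1 r| ≤ ∫ s in (0:ℝ)..r, s * ξ s := by
    rw [hd 1]
    calc |∫ s in (0:ℝ)..r, s ^ 1 * (Φ s - Φ' s)|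
        ≤ ∫ s in (0:ℝ)..r, |s ^ 1 * (Φ s - Φ' s)| :=
          intervalIntegral.abs_integral_le_integral_abs hr.1
      _ ≤ ∫ s in (0:ℝ)..r, s * ξ s := by
          apply intervalIntegral.integral_mono_on hr.1
            ((intInt (hΦ.sub hΦ') 1 hr).abs) hIξ
          intro s hs
          simpa [pow_one] using habs 1 s hs
  have h4 : |prim Φ 4 r - prim Φ' 4 r| ≤ r ^ 3 * ∫ s in (0:ℝ)..r, s * ξ s := by
    rw [hd 4]
    calc |∫ s in (0:ℝ)..r, s ^ 4 * (Φ s - Φ' s)|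
        ≤ ∫ s in (0:ℝ)..r, |s ^ 4 * (Φ s - Φ' s)| :=
          intervalIntegral.abs_integral_le_integral_abs hr.1
      _ ≤ ∫ s in (0:ℝ)..r, r ^ 3 * (s * ξ s) := by
          apply intervalIntegral.integral_mono_on hr.1
            ((intInt (hΦ.sub hΦ') 4 hr).abs) (hIξ.const_mul _)
          intro s hs
          refine le_trans (habs 4 s hs) ?_
          have h1 : s ^ 4 * ξ s = s ^ 3 * (s * ξ s) := by ring
          rw [h1]
          apply mul_le_mul_of_nonneg_right _ (mul_nonneg hs.1 (hξ0 s hs))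
          exact pow_le_pow_left₀ hs.1 hs.2 3
      _ = r ^ 3 * ∫ s in (0:ℝ)..r, s * ξ s := intervalIntegral.integral_const_mul _ _
  have hsplit : pOp c Φ r - pOp c Φ' r
      = (1/3) * (prim Φ 1 r - prim Φ' 1 r) - (1/(3*r^3)) * (prim Φ 4 r - prim Φ' 4 r) := by
    simp [pOp]; ring
  rw [hsplit]
  have hr3 : (0:ℝ) < r ^ 3 := by positivity
  have e2 : (0:ℝ) < 1/(3*r^3) := by positivity
  calc |(1/3) * (prim Φ 1 r - prim Φ' 1 r) - (1/(3*r^3)) * (prim Φ 4 r - prim Φ' 4 r)|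
      ≤ (1/3) * |prim Φ 1 r - prim Φ' 1 r| + (1/(3*r^3)) * |prim Φ 4 r - prim Φ' 4 r| := by
        have h := abs_sub ((1/3) * (prim Φ 1 r - prim Φ' 1 r))
          ((1/(3*r^3)) * (prim Φ 4 r - prim Φ' 4 r))
        rw [abs_mul, abs_mul, abs_of_pos e2,
          abs_of_nonneg (by norm_num : (0:ℝ) ≤ (1:ℝ)/3)] at h
        exact h
    _ ≤ (1/3) * (∫ s in (0:ℝ)..r, s * ξ s) + (1/(3*r^3)) * (r^3 * ∫ s in (0:ℝ)..r, s * ξ s) := by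
        gcongr
    _ ≤ ∫ s in (0:ℝ)..r, s * ξ s := by
        have h3 : (1/(3*r^3)) * r^3 = 1/3 := by
          field_simp
        nlinarith [hI0]

lemma pOp_sub_c_le {Φ : ℝ → ℝ} {b r c M : ℝ} (hΦ : ContinuousOn Φ (Ico 0 b)) (hr : r ∈ Ico 0 b)
    (hM : ∀ s ∈ Icc 0 r, |Φ s| ≤ M) : |pOp c Φ r - c| ≤ M * r ^ 2 := by
  have h0 : pOp c (fun _ => (0:ℝ)) r = c := by simp [pOp, prim]
  have hM0 : 0 ≤ M := le_trans (abs_nonneg _) (hM 0 ⟨le_refl _, hr.1⟩)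
  have := pOp_sub_le (Φ' := fun _ => 0) (ξ := fun _ => M) c hΦ
    continuousOn_const continuousOn_const hr (fun s hs => by simpa using hM s hs)
  rw [h0] at this
  refine le_trans this ?_
  have : ∫ s in (0:ℝ)..r, s * M = r^2/2 * M := by
    rw [intervalIntegral.integral_mul_const, integral_id]; ring
  rw [this]
  nlinarith [sq_nonneg r, hr.1]

lemma pOp_hasDerivAt {Φ : ℝ → ℝ} {b r : ℝ} (c : ℝ) (hΦ : ContinuousOn Φ (Ico 0 b))
    (hr : r ∈ Ioo 0 b) : HasDerivAt (pOp c Φ) (prim Φ 4 r / r ^ 4) r := by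
  have hr0 : r ≠ 0 := ne_of_gt hr.1
  have h1 := prim_hasDerivAt hΦ 1 hr
  have h4 := prim_hasDerivAt hΦ 4 hr
  have hp : HasDerivAt (fun t : ℝ => 3*t^3) (3*(3*r^2)) r := by
    simpa using (hasDerivAt_pow 3 r).const_mul (3:ℝ)
  have hinv : HasDerivAt (fun t : ℝ => 1/(3*t^3)) (-(3*(3*r^2))/(3*r^3)^2) r := by
    simp only [one_div]; exact hp.inv (by positivity)
  have H := ((h1.const_mul (1/3:ℝ)).const_add c).sub (hinv.mul h4)
  have hfun : (fun t => c + 1/3 * prim Φ 1 t - 1/(3*t^3) * prim Φ 4 t) = pOp c Φ := by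
    funext t; simp [pOp]
  rw [← hfun]
  refine H.congr_deriv ?_
  field_simp
  ring

lemma keyF1 {Φ : ℝ → ℝ} {b r : ℝ} (c : ℝ) (hΦ : ContinuousOn Φ (Ico 0 b)) (hr : r ∈ Ioo 0 b) :
    HasDerivAt (fun t => t^2 * pOp c Φ t) (2*r*pOp c Φ r + prim Φ 4 r / r^2) r := by
  have hr0 : r ≠ 0 := ne_of_gt hr.1
  have h := (hasDerivAt_pow 2 r).mul (pOp_hasDerivAt c hΦ hr)
  refine h.congr_deriv ?_
  field_simp
  ring

lemma keyF2 {Φ : ℝ → ℝ} {b r : ℝ} (c : ℝ) (hΦ : ContinuousOn Φ (Ico 0 b)) (hr : r ∈ Ioo 0 b) :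
    HasDerivAt (fun t => 2*t*pOp c Φ t + prim Φ 4 t / t^2)
      (2*(r^2*pOp c Φ r)/r^2 + r^2*Φ r) r := by
  have hr0 : r ≠ 0 := ne_of_gt hr.1
  have h1 : HasDerivAt (fun t : ℝ => 2*t) 2 r := by
    simpa using (hasDerivAt_id r).const_mul (2:ℝ)
  have h := (h1.mul (pOp_hasDerivAt c hΦ hr)).add
    ((prim_hasDerivAt hΦ 4 hr).div (hasDerivAt_pow 2 r) (pow_ne_zero 2 hr0))
  refine h.congr_deriv ?_
  field_simp
  ring

lemma keyR1 {Φ : ℝ → ℝ} {b r : ℝ} (c : ℝ) (hΦ : ContinuousOn Φ (Ico 0 b)) (hr : r ∈ Ioo 0 b) :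
    HasDerivAt (fun t => t * pOp c Φ t) (pOp c Φ r + prim Φ 4 r / r^3) r := by
  have hr0 : r ≠ 0 := ne_of_gt hr.1
  have h := (hasDerivAt_id r).mul (pOp_hasDerivAt c hΦ hr)
  refine h.congr_deriv ?_
  simp only [id_eq]
  field_simp

lemma keyR2 {Φ : ℝ → ℝ} {b r : ℝ} (c : ℝ) (hΦ : ContinuousOn Φ (Ico 0 b)) (hr : r ∈ Ioo 0 b) :
    HasDerivAt (fun t => pOp c Φ t + prim Φ 4 t / t^3)
      (r*Φ r - 2*(prim Φ 4 r)/r^4) r := by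
  have hr0 : r ≠ 0 := ne_of_gt hr.1
  have h := (pOp_hasDerivAt c hΦ hr).add
    ((prim_hasDerivAt hΦ 4 hr).div (hasDerivAt_pow 3 r) (pow_ne_zero 3 hr0))
  refine h.congr_deriv ?_
  field_simp
  ring

lemma pOp_continuousOn {Φ : ℝ → ℝ} {b : ℝ} (c : ℝ) (hb : 0 < b)
    (hΦ : ContinuousOn Φ (Ico 0 b)) : ContinuousOn (pOp c Φ) (Ico 0 b) := by
  intro r hr
  rcases eq_or_lt_of_le hr.1 with h0 | h0
  · obtain ⟨M, hM⟩ := (isCompact_Icc (a := (0:ℝ)) (b := b/2)).exists_bound_of_continuousOn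
      (hΦ.mono (fun s hs => ⟨hs.1, lt_of_le_of_lt hs.2 (by linarith)⟩))
    have key : ∀ t ∈ Ico 0 b ∩ Iic (b/2), |pOp c Φ t - c| ≤ M * t^2 := by
      intro t ht
      exact pOp_sub_c_le hΦ ht.1 (fun s hs => hM s ⟨hs.1, le_trans hs.2 ht.2⟩)
    have hto : Tendsto (fun t => pOp c Φ t - c) (𝓝[Ico 0 b] 0) (𝓝 0) := by
      apply squeeze_zero_norm'
      · have h1 : Iic (b/2) ∈ 𝓝[Ico 0 b] (0:ℝ) :=
          mem_nhdsWithin_of_mem_nhds (Iic_mem_nhds (by linarith))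
        filter_upwards [h1, self_mem_nhdsWithin] with t h1t h2t
        simpa [Real.norm_eq_abs] using key t ⟨h2t, h1t⟩
      · have : Tendsto (fun t : ℝ => M * t^2) (𝓝 0) (𝓝 (M * 0^2)) := by
          exact (continuous_const.mul (continuous_pow 2)).tendsto 0
        simpa using this.mono_left nhdsWithin_le_nhds
    have : Tendsto (pOp c Φ) (𝓝[Ico 0 b] 0) (𝓝 (0 + c)) := by
      have h2 := hto.add (tendsto_const_nhds (x := c) (f := 𝓝[Ico 0 b] (0:ℝ)))
      simpa using h2
    rw [← h0]
    unfold ContinuousWithinAt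
    rw [pOp_zero]
    simpa using this
  · exact ((pOp_hasDerivAt c hΦ ⟨h0, hr.2⟩).continuousAt).continuousWithinAt

lemma vanish {b : ℝ} (hb : 0 < b) (η ψ : ℝ → ℝ)
    (hη : ∀ r ∈ Ioo (0:ℝ) b, HasDerivAt η (ψ r / r^4) r)
    (hψ : ∀ r ∈ Ioo (0:ℝ) b, HasDerivAt ψ 0 r)
    (h0 : Tendsto η (𝓝[>] (0:ℝ)) (𝓝 0)) : ∀ r ∈ Ioo (0:ℝ) b, η r = 0 := by
  have hmem : b/2 ∈ Ioo (0:ℝ) b := ⟨by linarith, by linarith⟩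
  have hIoo : Ioo (0:ℝ) b ∈ 𝓝[>] (0:ℝ) := Ioo_mem_nhdsGT_of_mem ⟨le_refl _, hb⟩
  have const_of : ∀ F : ℝ → ℝ, (∀ r ∈ Ioo (0:ℝ) b, HasDerivAt F 0 r) →
      ∀ r ∈ Ioo (0:ℝ) b, F r = F (b/2) := by
    intro F hF r hr
    refine Convex.is_const_of_fderivWithin_eq_zero (convex_Ioo 0 b)
      (fun x hx => (hF x hx).differentiableAt.differentiableWithinAt) ?_ hr hmem
    intro x hx
    rw [fderivWithin_of_isOpen isOpen_Ioo hx, (hF x hx).hasFDerivAt.fderiv]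
    ext y; simp
  set c := ψ (b/2) with hc
  have hψc : ∀ r ∈ Ioo (0:ℝ) b, ψ r = c := const_of ψ hψ
  set θ := fun r => η r + c * (1/(3*r^3)) with hθ
  have hθd : ∀ r ∈ Ioo (0:ℝ) b, HasDerivAt θ 0 r := by
    intro r hr
    have hr0 : r ≠ 0 := ne_of_gt hr.1
    have hp : HasDerivAt (fun t : ℝ => 3*t^3) (3*(3*r^2)) r := by
      simpa using (hasDerivAt_pow 3 r).const_mul (3:ℝ)
    have hinv : HasDerivAt (fun t : ℝ => 1/(3*t^3)) (-(3*(3*r^2))/(3*r^3)^2) r := by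
      simp only [one_div]; exact hp.inv (by positivity)
    have h := (hη r hr).add (hinv.const_mul c)
    refine h.congr_deriv ?_
    rw [hψc r hr]
    field_simp
    ring
  have hθc : ∀ r ∈ Ioo (0:ℝ) b, θ r = θ (b/2) := const_of θ hθd
  set d := θ (b/2) with hd
  have htendθ : Tendsto θ (𝓝[>] (0:ℝ)) (𝓝 d) := by
    apply Tendsto.congr' _ (tendsto_const_nhds (x := d))
    filter_upwards [hIoo] with r hr
    exact (hθc r hr).symm
  have htendc : Tendsto (fun r => c * (1/(3*r^3))) (𝓝[>] (0:ℝ)) (𝓝 (d - 0)) := by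
    have := htendθ.sub h0
    apply this.congr
    intro r; simp only [hθ]; ring
  have hc0 : c = 0 := by
    have h3 : Tendsto (fun r : ℝ => 3*r^3) (𝓝[>] (0:ℝ)) (𝓝 0) := by
      have : Tendsto (fun r : ℝ => 3*r^3) (𝓝 0) (𝓝 (3*0^3)) :=
        (continuous_const.mul (continuous_pow 3)).tendsto 0
      simpa using this.mono_left nhdsWithin_le_nhds
    have hmul : Tendsto (fun r : ℝ => (3*r^3) * (c * (1/(3*r^3)))) (𝓝[>] (0:ℝ))
        (𝓝 (0 * (d - 0))) := h3.mul htendc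
    have heq : Tendsto (fun _ : ℝ => c) (𝓝[>] (0:ℝ)) (𝓝 (0 * (d - 0))) := by
      apply hmul.congr'
      filter_upwards [self_mem_nhdsWithin] with r hr
      have hr0 : (3:ℝ)*r^3 ≠ 0 := by
        have : (0:ℝ) < r := hr
        positivity
      have : (r:ℝ) ≠ 0 := ne_of_gt hr
      field_simp
    have := tendsto_nhds_unique heq (tendsto_const_nhds (x := c))
    simpa using this.symm
  have hηd : ∀ r ∈ Ioo (0:ℝ) b, η r = d := by
    intro r hr
    have := hθc r hr
    simp only [hθ, hc0] at this ⊢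
    simpa using this
  have hd0 : d = 0 := by
    have htd : Tendsto η (𝓝[>] (0:ℝ)) (𝓝 d) := by
      apply Tendsto.congr' _ (tendsto_const_nhds (x := d))
      filter_upwards [hIoo] with r hr
      exact (hηd r hr).symm
    exact tendsto_nhds_unique htd h0
  intro r hr
  rw [hηd r hr, hd0]

lemma gronwall {b L : ℝ} (hb : 0 < b) (hL : 0 ≤ L) (φ : ℝ → ℝ)
    (hφc : ContinuousOn φ (Icc 0 b)) (hφ0 : ∀ s ∈ Icc 0 b, 0 ≤ φ s)
    (hineq : ∀ r ∈ Ioo (0:ℝ) b, φ r ≤ L * ∫ s in (0:ℝ)..r, s * φ s) :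
    ∀ r ∈ Ioo (0:ℝ) b, φ r = 0 := by
  set J := fun r => ∫ s in (0:ℝ)..r, s * φ s with hJdef
  have hIco : ContinuousOn φ (Ico 0 b) := hφc.mono Ico_subset_Icc_self
  have hJd : ∀ r ∈ Ioo (0:ℝ) b, HasDerivAt J (r * φ r) r := by
    intro r hr
    have h := prim_hasDerivAt hIco 1 hr
    have hJp : J = prim φ 1 := by
      funext t; simp [prim, hJdef]
    rw [hJp]
    simpa using h
  have hJc : ContinuousOn J (Icc 0 b) := by
    have h := intervalIntegral.continuousOn_primitive_interval
      (f := fun s => s * φ s) (a := (0:ℝ)) (b := b) (μ := volume) ?_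
    · rwa [uIcc_of_le hb.le] at h
    · rw [uIcc_of_le hb.le]
      exact ((continuous_id.continuousOn).mul hφc).integrableOn_compact isCompact_Icc
  have hJ0 : ∀ r ∈ Icc 0 b, 0 ≤ J r := by
    intro r hr
    apply intervalIntegral.integral_nonneg hr.1
    intro s hs
    exact mul_nonneg hs.1 (hφ0 s ⟨hs.1, le_trans hs.2 hr.2⟩)
  set θ := fun r => J r * exp (-(L * r^2/2)) with hθdef
  have hE : ∀ r : ℝ, HasDerivAt (fun t : ℝ => exp (-(L * t^2/2)))
      (exp (-(L * r^2/2)) * -(L * (2*r)/2)) r := by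
    intro r
    have h1 : HasDerivAt (fun t : ℝ => -(L * t^2/2)) (-(L * (2*r)/2)) r := by
      have := ((hasDerivAt_pow 2 r).const_mul L).div_const 2
      exact (by simpa using this : HasDerivAt (fun t : ℝ => L * t^2/2) (L * (2*r)/2) r).neg
    exact h1.exp
  have hθd : ∀ r ∈ Ioo (0:ℝ) b, HasDerivAt θ
      (exp (-(L * r^2/2)) * (r * φ r - L * r * J r)) r := by
    intro r hr
    have h := (hJd r hr).mul (hE r)
    refine h.congr_deriv ?_
    ring
  have hanti : AntitoneOn θ (Icc 0 b) := by
    apply antitoneOn_of_deriv_nonpos (convex_Icc 0 b)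
    · exact hJc.mul (continuous_exp.comp (by continuity)).continuousOn
    · intro x hx
      rw [interior_Icc] at hx
      exact (hθd x hx).differentiableAt.differentiableWithinAt
    · intro x hx
      rw [interior_Icc] at hx
      rw [(hθd x hx).deriv]
      have h1 : x * φ x - L * x * J x ≤ 0 := by
        have := hineq x hx
        nlinarith [hx.1]
      exact mul_nonpos_of_nonneg_of_nonpos (exp_pos _).le h1
  intro r hr
  have hθr : θ r ≤ θ 0 := hanti ⟨le_refl _, hb.le⟩ ⟨hr.1.le, hr.2.le⟩ hr.1.le
  have hθ0 : θ 0 = 0 := by simp [hθdef, hJdef]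
  have hJr : J r = 0 := by
    have he : (0:ℝ) < exp (-(L * r^2/2)) := exp_pos _
    have hle : J r ≤ 0 := by
      rw [hθ0] at hθr
      have hθr' : J r * exp (-(L * r^2/2)) ≤ 0 := hθr
      by_contra hcon
      push_neg at hcon
      nlinarith [mul_pos hcon he]
    exact le_antisymm hle (hJ0 r ⟨hr.1.le, hr.2.le⟩)
  have h1 : φ r ≤ L * J r := hineq r hr
  have h2 := hφ0 r ⟨hr.1.le, hr.2.le⟩
  rw [hJr] at h1
  linarith

noncomputable def gE (g₀ : ℝ) (s p q : ℝ) : ℝ := p^2*(s^2*p+3) + g₀^2*q^2*(1+s^2*p)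
noncomputable def hE (lam ρ₀ : ℝ) (s p q : ℝ) : ℝ := (2*s^2*p^2+4*p)*q + lam*(s^2*q^2-ρ₀^2)*q
noncomputable def NE (g₀ lam ρ₀ : ℝ) : ℝ × ℝ × ℝ → ℝ × ℝ :=
  fun z => (gE g₀ z.1 z.2.1 z.2.2, hE lam ρ₀ z.1 z.2.1 z.2.2)

lemma NE_contDiff (g₀ lam ρ₀ : ℝ) : ContDiff ℝ 1 (NE g₀ lam ρ₀) := by
  unfold NE gE hE
  fun_prop

lemma gE_cont (g₀ lam ρ₀ : ℝ) {P Q : ℝ → ℝ} {S : Set ℝ} (hP : ContinuousOn P S)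
    (hQ : ContinuousOn Q S) : ContinuousOn (fun s => gE g₀ s (P s) (Q s)) S := by
  unfold gE; fun_prop

lemma hE_cont (g₀ lam ρ₀ : ℝ) {P Q : ℝ → ℝ} {S : Set ℝ} (hP : ContinuousOn P S)
    (hQ : ContinuousOn Q S) : ContinuousOn (fun s => hE lam ρ₀ s (P s) (Q s)) S := by
  unfold hE; fun_prop

lemma NE_bound_lip (g₀ lam ρ₀ R : ℝ) : ∃ M L : ℝ, 0 ≤ M ∧ 0 ≤ L ∧
    (∀ s ∈ Icc (0:ℝ) 1, ∀ y ∈ Metric.closedBall (0:ℝ×ℝ) R, ‖NE g₀ lam ρ₀ (s, y)‖ ≤ M) ∧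
    (∀ s ∈ Icc (0:ℝ) 1, ∀ y ∈ Metric.closedBall (0:ℝ×ℝ) R, ∀ y' ∈ Metric.closedBall (0:ℝ×ℝ) R,
      ‖NE g₀ lam ρ₀ (s, y) - NE g₀ lam ρ₀ (s, y')‖ ≤ L * ‖y - y'‖) := by
  set K : Set (ℝ × ℝ × ℝ) := Icc (0:ℝ) 1 ×ˢ Metric.closedBall (0:ℝ×ℝ) R with hK
  have hKc : IsCompact K := isCompact_Icc.prod (isCompact_closedBall _ _)
  have hKv : Convex ℝ K := (convex_Icc _ _).prod (convex_closedBall _ _)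
  obtain ⟨M₀, hM₀⟩ :=
    hKc.exists_bound_of_continuousOn ((NE_contDiff g₀ lam ρ₀).continuous.continuousOn)
  obtain ⟨L₀, hL₀⟩ := hKc.exists_bound_of_continuousOn
    (((NE_contDiff g₀ lam ρ₀).continuous_fderiv one_ne_zero).norm.continuousOn)
  refine ⟨max M₀ 0, max L₀ 0, le_max_right _ _, le_max_right _ _, ?_, ?_⟩
  · intro s hs y hy
    exact le_trans (hM₀ (s, y) ⟨hs, hy⟩) (le_max_left _ _)
  · intro s hs y hy y' hy'
    have hlip : LipschitzOnWith (max L₀ 0).toNNReal (NE g₀ lam ρ₀) K := by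
      apply hKv.lipschitzOnWith_of_nnnorm_hasFDerivWithin_le
        (f' := fun x => fderiv ℝ (NE g₀ lam ρ₀) x)
        (fun x _ =>
          (((NE_contDiff g₀ lam ρ₀).differentiable one_ne_zero) x).hasFDerivAt.hasFDerivWithinAt)
      intro x hx
      rw [← NNReal.coe_le_coe, coe_nnnorm, Real.coe_toNNReal _ (le_max_right L₀ 0)]
      calc ‖fderiv ℝ (NE g₀ lam ρ₀) x‖ ≤ ‖‖fderiv ℝ (NE g₀ lam ρ₀) x‖‖ := le_abs_self _
        _ ≤ L₀ := hL₀ x hx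
        _ ≤ max L₀ 0 := le_max_left _ _
    have h := hlip.dist_le_mul (s, y) ⟨hs, hy⟩ (s, y') ⟨hs, hy'⟩
    rw [Real.coe_toNNReal _ (le_max_right L₀ 0)] at h
    rw [dist_eq_norm] at h
    refine le_trans h ?_
    have hd : dist ((s, y) : ℝ × ℝ × ℝ) (s, y') = ‖y - y'‖ := by
      rw [Prod.dist_eq, dist_self, dist_eq_norm]
      exact max_eq_right (norm_nonneg _)
    rw [hd]

lemma uniq_int (α β g₀ lam ρ₀ : ℝ) {b : ℝ} (hb : 0 < b) (hb1 : b ≤ 1)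
    (P₁ Q₁ P₂ Q₂ : ℝ → ℝ)
    (hP₁ : ContinuousOn P₁ (Ico 0 b)) (hQ₁ : ContinuousOn Q₁ (Ico 0 b))
    (hP₂ : ContinuousOn P₂ (Ico 0 b)) (hQ₂ : ContinuousOn Q₂ (Ico 0 b))
    (e₁ : ∀ r ∈ Ioo (0:ℝ) b, P₁ r = pOp (-α) (fun s => gE g₀ s (P₁ s) (Q₁ s)) r ∧
          Q₁ r = pOp β (fun s => hE lam ρ₀ s (P₁ s) (Q₁ s)) r)
    (e₂ : ∀ r ∈ Ioo (0:ℝ) b, P₂ r = pOp (-α) (fun s => gE g₀ s (P₂ s) (Q₂ s)) r ∧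
          Q₂ r = pOp β (fun s => hE lam ρ₀ s (P₂ s) (Q₂ s)) r) :
    ∀ r ∈ Ioo (0:ℝ) b, P₁ r = P₂ r ∧ Q₁ r = Q₂ r := by
  intro r hr
  set r₀ := (r + b)/2 with hr₀def
  have hr₀0 : 0 < r₀ := by simp only [hr₀def]; linarith [hr.1, hr.2]
  have hr₀b : r₀ < b := by simp only [hr₀def]; linarith [hr.1, hr.2]
  have hrr₀ : r < r₀ := by simp only [hr₀def]; linarith [hr.2]
  have hsub : Icc (0:ℝ) r₀ ⊆ Ico 0 b := fun s hs => ⟨hs.1, lt_of_le_of_lt hs.2 hr₀b⟩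
  obtain ⟨B₁, hB₁⟩ := isCompact_Icc.exists_bound_of_continuousOn ((hP₁.mono hsub))
  obtain ⟨B₂, hB₂⟩ := isCompact_Icc.exists_bound_of_continuousOn ((hQ₁.mono hsub))
  obtain ⟨B₃, hB₃⟩ := isCompact_Icc.exists_bound_of_continuousOn ((hP₂.mono hsub))
  obtain ⟨B₄, hB₄⟩ := isCompact_Icc.exists_bound_of_continuousOn ((hQ₂.mono hsub))
  set R := max (max B₁ B₂) (max B₃ B₄) with hR
  have hy₁ : ∀ s ∈ Icc (0:ℝ) r₀, ((P₁ s, Q₁ s) : ℝ × ℝ) ∈ Metric.closedBall (0:ℝ×ℝ) R := by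
    intro s hs
    rw [mem_closedBall_zero_iff, Prod.norm_def]
    apply max_le
    · exact le_trans (hB₁ s hs) (le_trans (le_max_left _ _) (le_max_left _ _))
    · exact le_trans (hB₂ s hs) (le_trans (le_max_right _ _) (le_max_left _ _))
  have hy₂ : ∀ s ∈ Icc (0:ℝ) r₀, ((P₂ s, Q₂ s) : ℝ × ℝ) ∈ Metric.closedBall (0:ℝ×ℝ) R := by
    intro s hs
    rw [mem_closedBall_zero_iff, Prod.norm_def]
    apply max_le
    · exact le_trans (hB₃ s hs) (le_trans (le_max_left _ _) (le_max_right _ _))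
    · exact le_trans (hB₄ s hs) (le_trans (le_max_right _ _) (le_max_right _ _))
  obtain ⟨M, L, hM0, hL0, hMb, hLb⟩ := NE_bound_lip g₀ lam ρ₀ R
  set φ := fun s => max |P₁ s - P₂ s| |Q₁ s - Q₂ s| with hφdef
  have hsub' : Icc (0:ℝ) r₀ ⊆ Icc 0 b := Icc_subset_Icc_right hr₀b.le
  have hφc : ContinuousOn φ (Icc 0 r₀) := by
    apply ContinuousOn.mono _ hsub
    exact ContinuousOn.sup (hP₁.sub hP₂).abs (hQ₁.sub hQ₂).abs
  have hφ0 : ∀ s ∈ Icc (0:ℝ) r₀, 0 ≤ φ s := fun s _ =>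
    le_trans (abs_nonneg _) (le_max_left _ _)
  -- pointwise Lipschitz bounds on the nonlinearities
  have hglip : ∀ s ∈ Icc (0:ℝ) r₀,
      |gE g₀ s (P₁ s) (Q₁ s) - gE g₀ s (P₂ s) (Q₂ s)| ≤ L * φ s ∧
      |hE lam ρ₀ s (P₁ s) (Q₁ s) - hE lam ρ₀ s (P₂ s) (Q₂ s)| ≤ L * φ s := by
    intro s hs
    have hs1 : s ∈ Icc (0:ℝ) 1 := ⟨hs.1, le_trans hs.2 (by linarith)⟩
    have h := hLb s hs1 (P₁ s, Q₁ s) (hy₁ s hs) (P₂ s, Q₂ s) (hy₂ s hs)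
    have hnm : ‖((P₁ s, Q₁ s) : ℝ × ℝ) - (P₂ s, Q₂ s)‖ = φ s := by
      rw [Prod.mk_sub_mk, Prod.norm_def]
      simp [Real.norm_eq_abs, hφdef]
    rw [hnm] at h
    constructor
    · refine le_trans ?_ h
      have := norm_fst_le (NE g₀ lam ρ₀ (s, (P₁ s, Q₁ s)) - NE g₀ lam ρ₀ (s, (P₂ s, Q₂ s)))
      simpa [NE, Real.norm_eq_abs] using this
    · refine le_trans ?_ h
      have := norm_snd_le (NE g₀ lam ρ₀ (s, (P₁ s, Q₁ s)) - NE g₀ lam ρ₀ (s, (P₂ s, Q₂ s)))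
      simpa [NE, Real.norm_eq_abs] using this
  have hΦ₁ : ContinuousOn (fun s => gE g₀ s (P₁ s) (Q₁ s)) (Ico 0 r₀) :=
    gE_cont g₀ lam ρ₀ (hP₁.mono (Ico_subset_Ico_right hr₀b.le))
      (hQ₁.mono (Ico_subset_Ico_right hr₀b.le))
  have hΦ₂ : ContinuousOn (fun s => gE g₀ s (P₂ s) (Q₂ s)) (Ico 0 r₀) :=
    gE_cont g₀ lam ρ₀ (hP₂.mono (Ico_subset_Ico_right hr₀b.le))
      (hQ₂.mono (Ico_subset_Ico_right hr₀b.le))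
  have hΨ₁ : ContinuousOn (fun s => hE lam ρ₀ s (P₁ s) (Q₁ s)) (Ico 0 r₀) :=
    hE_cont g₀ lam ρ₀ (hP₁.mono (Ico_subset_Ico_right hr₀b.le))
      (hQ₁.mono (Ico_subset_Ico_right hr₀b.le))
  have hΨ₂ : ContinuousOn (fun s => hE lam ρ₀ s (P₂ s) (Q₂ s)) (Ico 0 r₀) :=
    hE_cont g₀ lam ρ₀ (hP₂.mono (Ico_subset_Ico_right hr₀b.le))
      (hQ₂.mono (Ico_subset_Ico_right hr₀b.le))
  have hξc : ContinuousOn (fun s => L * φ s) (Ico 0 r₀) :=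
    continuousOn_const.mul (hφc.mono Ico_subset_Icc_self)
  have hineq : ∀ t ∈ Ioo (0:ℝ) r₀, φ t ≤ L * ∫ s in (0:ℝ)..t, s * φ s := by
    intro t ht
    have htb : t ∈ Ioo (0:ℝ) b := ⟨ht.1, lt_trans ht.2 hr₀b⟩
    have htIco : t ∈ Ico (0:ℝ) r₀ := ⟨ht.1.le, ht.2⟩
    have hIccsub : Icc (0:ℝ) t ⊆ Icc 0 r₀ := Icc_subset_Icc_right ht.2.le
    have hint_eq : ∫ s in (0:ℝ)..t, s * (L * φ s) = L * ∫ s in (0:ℝ)..t, s * φ s := by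
      rw [← intervalIntegral.integral_const_mul]
      congr 1; funext s; ring
    have h1 : |P₁ t - P₂ t| ≤ L * ∫ s in (0:ℝ)..t, s * φ s := by
      rw [(e₁ t htb).1, (e₂ t htb).1, ← hint_eq]
      exact pOp_sub_le (-α) hΦ₁ hΦ₂ hξc htIco
        (fun s hs => (hglip s (hIccsub hs)).1)
    have h2 : |Q₁ t - Q₂ t| ≤ L * ∫ s in (0:ℝ)..t, s * φ s := by
      rw [(e₁ t htb).2, (e₂ t htb).2, ← hint_eq]
      exact pOp_sub_le β hΨ₁ hΨ₂ hξc htIco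
        (fun s hs => (hglip s (hIccsub hs)).2)
    exact max_le h1 h2
  have hzero := gronwall hr₀0 hL0 φ hφc hφ0 hineq r ⟨hr.1, hrr₀⟩
  have habs1 : |P₁ r - P₂ r| = 0 := by
    have h := le_max_left |P₁ r - P₂ r| |Q₁ r - Q₂ r|
    rw [show max |P₁ r - P₂ r| |Q₁ r - Q₂ r| = φ r from rfl, hzero] at h
    exact le_antisymm h (abs_nonneg _)
  have habs2 : |Q₁ r - Q₂ r| = 0 := by
    have h := le_max_right |P₁ r - P₂ r| |Q₁ r - Q₂ r|
    rw [show max |P₁ r - P₂ r| |Q₁ r - Q₂ r| = φ r from rfl, hzero] at h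
    exact le_antisymm h (abs_nonneg _)
  constructor
  · have := abs_eq_zero.mp habs1; linarith
  · have := abs_eq_zero.mp habs2; linarith

lemma exists_fixed (α β g₀ lam ρ₀ : ℝ) : ∃ ε : ℝ, 0 < ε ∧ ε ≤ 1 ∧ ∃ P Q : ℝ → ℝ,
    Continuous P ∧ Continuous Q ∧
    (∀ r ∈ Icc (0:ℝ) ε, P r = pOp (-α) (fun s => gE g₀ s (P s) (Q s)) r ∧
      Q r = pOp β (fun s => hE lam ρ₀ s (P s) (Q s)) r) := by
  classical
  set v₀ : ℝ × ℝ := (-α, β) with hv₀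
  set R : ℝ := ‖v₀‖ + 1 with hRdef
  obtain ⟨M, L, hM0, hL0, hMb, hLb⟩ := NE_bound_lip g₀ lam ρ₀ R
  set ε : ℝ := min 1 (min (1/(M+1)) (1/(2*(L+1)))) with hεdef
  have hε : 0 < ε := by
    apply lt_min (by norm_num)
    apply lt_min <;> positivity
  have hε1 : ε ≤ 1 := min_le_left _ _
  have hεM : ε ≤ 1/(M+1) := le_trans (min_le_right _ _) (min_le_left _ _)
  have hεL : ε ≤ 1/(2*(L+1)) := le_trans (min_le_right _ _) (min_le_right _ _)
  have hMε : M * ε^2 ≤ 1 := by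
    have h1 : M * ε ≤ M * (1/(M+1)) := mul_le_mul_of_nonneg_left hεM hM0
    have h2 : M * (1/(M+1)) ≤ 1 := by
      rw [mul_one_div, div_le_one (by linarith)]; linarith
    nlinarith [hε.le]
  have hLε : L * ε^2 ≤ 1/2 := by
    have h1 : L * ε ≤ L * (1/(2*(L+1))) := mul_le_mul_of_nonneg_left hεL hL0
    have h2 : L * (1/(2*(L+1))) ≤ 1/2 := by
      rw [mul_one_div, div_le_div_iff₀ (by linarith) (by norm_num)]; linarith
    nlinarith [hε.le]
  -- the function space
  set I : Set ℝ := Icc 0 ε with hI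
  let X := C(I, ℝ × ℝ)
  let x₀ : X := ContinuousMap.const I v₀
  -- extension of an element of X to ℝ
  let ext : X → ℝ → ℝ × ℝ := fun x s => x (projIcc 0 ε hε.le s)
  have hextc : ∀ x : X, Continuous (ext x) := fun x => x.continuous.comp continuous_projIcc
  let Φf : X → ℝ → ℝ := fun x s => gE g₀ s (ext x s).1 (ext x s).2
  let Ψf : X → ℝ → ℝ := fun x s => hE lam ρ₀ s (ext x s).1 (ext x s).2
  have hΦc : ∀ x : X, Continuous (Φf x) := by
    intro x
    have h1 : Continuous fun s => (ext x s).1 := continuous_fst.comp (hextc x)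
    have h2 : Continuous fun s => (ext x s).2 := continuous_snd.comp (hextc x)
    show Continuous fun s => gE g₀ s (ext x s).1 (ext x s).2
    unfold gE; fun_prop
  have hΨc : ∀ x : X, Continuous (Ψf x) := by
    intro x
    have h1 : Continuous fun s => (ext x s).1 := continuous_fst.comp (hextc x)
    have h2 : Continuous fun s => (ext x s).2 := continuous_snd.comp (hextc x)
    show Continuous fun s => hE lam ρ₀ s (ext x s).1 (ext x s).2
    unfold hE; fun_prop
  have hmemIco : ∀ t : I, (t : ℝ) ∈ Ico (0:ℝ) (ε+1) :=
    fun t => ⟨t.2.1, lt_of_le_of_lt t.2.2 (by linarith)⟩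
  -- the operator
  have hTc : ∀ x : X, Continuous (fun t : I => ((pOp (-α) (Φf x) t, pOp β (Ψf x) t) : ℝ × ℝ)) := by
    intro x
    apply Continuous.prodMk
    · exact (pOp_continuousOn (-α) (by linarith : (0:ℝ) < ε + 1)
        (hΦc x).continuousOn).comp_continuous continuous_subtype_val hmemIco
    · exact (pOp_continuousOn β (by linarith : (0:ℝ) < ε + 1)
        (hΨc x).continuousOn).comp_continuous continuous_subtype_val hmemIco
  let T : X → X := fun x => ⟨_, hTc x⟩
  -- membership bound
  have hmemball : ∀ x : X, dist x x₀ ≤ 1 → ∀ s : ℝ, ext x s ∈ Metric.closedBall (0:ℝ×ℝ) R := by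
    intro x hx s
    rw [Metric.mem_closedBall]
    calc dist (ext x s) 0 ≤ dist (ext x s) v₀ + dist v₀ 0 := dist_triangle _ _ _
      _ ≤ 1 + ‖v₀‖ := by
          apply add_le_add
          · exact le_trans
              (ContinuousMap.dist_apply_le_dist (f := x) (g := x₀) (projIcc 0 ε hε.le s)) hx
          · rw [dist_zero_right]
      _ = R := by rw [hRdef]; ring
  have hΦbound : ∀ x : X, dist x x₀ ≤ 1 → ∀ s ∈ Icc (0:ℝ) ε,
      |Φf x s| ≤ M ∧ |Ψf x s| ≤ M := by
    intro x hx s hs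
    have h := hMb s ⟨hs.1, le_trans hs.2 hε1⟩ (ext x s) (hmemball x hx s)
    have h1 := norm_fst_le (NE g₀ lam ρ₀ (s, ext x s))
    have h2 := norm_snd_le (NE g₀ lam ρ₀ (s, ext x s))
    constructor
    · exact le_trans h1 h
    · exact le_trans h2 h
  -- T maps the ball into itself
  have hmaps : ∀ x : X, dist x x₀ ≤ 1 → dist (T x) x₀ ≤ 1 := by
    intro x hx
    rw [ContinuousMap.dist_le (by norm_num : (0:ℝ) ≤ 1)]
    intro t
    have ht : (t : ℝ) ∈ Icc (0:ℝ) ε := t.2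
    have hb1 : |pOp (-α) (Φf x) t - (-α)| ≤ M * (t:ℝ)^2 :=
      pOp_sub_c_le (b := ε+1) (hΦc x).continuousOn (hmemIco t)
        (fun s hs => (hΦbound x hx s ⟨hs.1, le_trans hs.2 ht.2⟩).1)
    have hb2 : |pOp β (Ψf x) t - β| ≤ M * (t:ℝ)^2 :=
      pOp_sub_c_le (b := ε+1) (hΨc x).continuousOn (hmemIco t)
        (fun s hs => (hΦbound x hx s ⟨hs.1, le_trans hs.2 ht.2⟩).2)
    have hMt : M * (t:ℝ)^2 ≤ 1 := by
      have ht2 : (t:ℝ)^2 ≤ ε^2 := by nlinarith [ht.1, ht.2]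
      nlinarith [mul_le_mul_of_nonneg_left ht2 hM0]
    have hTxt : (T x) t = (pOp (-α) (Φf x) t, pOp β (Ψf x) t) := rfl
    rw [show x₀ t = v₀ from rfl, hTxt, Prod.dist_eq]
    apply max_le
    · rw [Real.dist_eq]; exact le_trans hb1 hMt
    · rw [Real.dist_eq]; exact le_trans hb2 hMt
  -- contraction estimate
  have hcontr : ∀ x y : X, dist x x₀ ≤ 1 → dist y x₀ ≤ 1 →
      dist (T x) (T y) ≤ (1/2) * dist x y := by
    intro x y hx hy
    rw [ContinuousMap.dist_le (by positivity)]
    intro t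
    have ht : (t : ℝ) ∈ Icc (0:ℝ) ε := t.2
    set d := dist x y with hddef
    have hd0 : 0 ≤ d := dist_nonneg
    have hΔ : ∀ s ∈ Icc (0:ℝ) ε, |Φf x s - Φf y s| ≤ L * d ∧ |Ψf x s - Ψf y s| ≤ L * d := by
      intro s hs
      have h := hLb s ⟨hs.1, le_trans hs.2 hε1⟩ (ext x s) (hmemball x hx s)
        (ext y s) (hmemball y hy s)
      have hn : ‖ext x s - ext y s‖ ≤ d := by
        rw [← dist_eq_norm]
        exact ContinuousMap.dist_apply_le_dist _
      have h' : ‖NE g₀ lam ρ₀ (s, ext x s) - NE g₀ lam ρ₀ (s, ext y s)‖ ≤ L * d :=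
        le_trans h (mul_le_mul_of_nonneg_left hn hL0)
      have h1 := norm_fst_le (NE g₀ lam ρ₀ (s, ext x s) - NE g₀ lam ρ₀ (s, ext y s))
      have h2 := norm_snd_le (NE g₀ lam ρ₀ (s, ext x s) - NE g₀ lam ρ₀ (s, ext y s))
      constructor
      · exact le_trans h1 h'
      · exact le_trans h2 h'
    have hIeq : ∫ s in (0:ℝ)..(t:ℝ), s * (L * d) = (t:ℝ)^2/2 * (L * d) := by
      rw [intervalIntegral.integral_mul_const, integral_id]; ring
    have hfin : (t:ℝ)^2/2 * (L*d) ≤ 1/2 * d := by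
      have ht2 : (t:ℝ)^2 ≤ ε^2 := by nlinarith [ht.1, ht.2]
      have hA : L * (t:ℝ)^2 * d ≤ L * ε^2 * d :=
        mul_le_mul_of_nonneg_right (mul_le_mul_of_nonneg_left ht2 hL0) hd0
      have hB : L * ε^2 * d ≤ 1/2 * d := mul_le_mul_of_nonneg_right hLε hd0
      nlinarith [hA, hB]
    have hb1 : |pOp (-α) (Φf x) t - pOp (-α) (Φf y) t| ≤ 1/2 * d := by
      refine le_trans (le_trans (pOp_sub_le (b := ε+1) (-α) (hΦc x).continuousOn
        (hΦc y).continuousOn continuousOn_const (hmemIco t)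
        (fun s hs => (hΔ s ⟨hs.1, le_trans hs.2 ht.2⟩).1)) ?_) hfin
      rw [hIeq]
    have hb2 : |pOp β (Ψf x) t - pOp β (Ψf y) t| ≤ 1/2 * d := by
      refine le_trans (le_trans (pOp_sub_le (b := ε+1) β (hΨc x).continuousOn
        (hΨc y).continuousOn continuousOn_const (hmemIco t)
        (fun s hs => (hΔ s ⟨hs.1, le_trans hs.2 ht.2⟩).2)) ?_) hfin
      rw [hIeq]
    have hTxt : (T x) t = (pOp (-α) (Φf x) t, pOp β (Ψf x) t) := rfl
    have hTyt : (T y) t = (pOp (-α) (Φf y) t, pOp β (Ψf y) t) := rfl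
    rw [hTxt, hTyt, Prod.dist_eq]
    apply max_le
    · rw [Real.dist_eq]; exact hb1
    · rw [Real.dist_eq]; exact hb2
  -- Banach fixed point on the closed ball
  let S := Metric.closedBall x₀ 1
  haveI : CompleteSpace S := Metric.isClosed_closedBall.completeSpace_coe
  haveI : Nonempty S := ⟨⟨x₀, Metric.mem_closedBall_self (by norm_num)⟩⟩
  let T' : S → S := fun z => ⟨T z.1, by
    rw [Metric.mem_closedBall]
    exact hmaps z.1 (Metric.mem_closedBall.mp z.2)⟩
  have hCW : ContractingWith (1/2 : NNReal) T' := by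
    constructor
    · rw [← NNReal.coe_lt_coe]; norm_num
    · apply LipschitzWith.of_dist_le_mul
      intro z w
      rw [Subtype.dist_eq, Subtype.dist_eq]
      have := hcontr z.1 w.1 (Metric.mem_closedBall.mp z.2) (Metric.mem_closedBall.mp w.2)
      calc dist (T z.1) (T w.1) ≤ 1/2 * dist (z.1 : X) w.1 := this
        _ = ((1/2 : NNReal) : ℝ) * dist (z.1 : X) w.1 := by norm_num
  let z := ContractingWith.fixedPoint T' hCW
  have hz : T' z = z := hCW.fixedPoint_isFixedPt
  have hzX : T z.1 = z.1 := by
    exact congrArg Subtype.val hz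
  refine ⟨ε, hε, hε1, fun s => (ext z.1 s).1, fun s => (ext z.1 s).2,
    continuous_fst.comp (hextc z.1), continuous_snd.comp (hextc z.1), ?_⟩
  intro r hr
  have h1 : (T z.1) ⟨r, hr⟩ = z.1 ⟨r, hr⟩ := by rw [hzX]
  have h2 : ext z.1 r = z.1 ⟨r, hr⟩ := by
    show z.1 (projIcc 0 ε hε.le r) = _
    rw [projIcc_of_mem]
  have h3 : (T z.1) ⟨r, hr⟩ = (pOp (-α) (Φf z.1) r, pOp β (Ψf z.1) r) := rfl
  constructor
  · show (ext z.1 r).1 = _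
    rw [h2, ← h1, h3]
  · show (ext z.1 r).2 = _
    rw [h2, ← h1, h3]

lemma sol_to_int (α β g₀ lam ρ₀ : ℝ) {ε : ℝ} (hε : 0 < ε) (f₂ ρ₂ : ℝ → ℝ)
    (hcf : ContDiffOn ℝ 2 f₂ (Ioo 0 ε)) (hcρ : ContDiffOn ℝ 2 ρ₂ (Ioo 0 ε))
    (hode : ∀ r ∈ Ioo (0:ℝ) ε,
      deriv (deriv f₂) r - (((f₂ r) ^ 2 - 1) / r ^ 2) * f₂ r = g₀ ^ 2 * (ρ₂ r) ^ 2 * f₂ r ∧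
      deriv (deriv ρ₂) r + (2 / r) * deriv ρ₂ r - (2 * (f₂ r) ^ 2 / r ^ 2) * ρ₂ r
        = lam * ((ρ₂ r) ^ 2 - ρ₀ ^ 2) * ρ₂ r)
    (hasf : Tendsto (fun r => (f₂ r - 1 + α * r ^ 2) / r ^ 2) (𝓝[>] (0:ℝ)) (𝓝 0))
    (hasρ : Tendsto (fun r => (ρ₂ r - β * r) / r) (𝓝[>] (0:ℝ)) (𝓝 0)) :
    ∃ P₂ Q₂ : ℝ → ℝ, ContinuousOn P₂ (Ico 0 ε) ∧ ContinuousOn Q₂ (Ico 0 ε) ∧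
      (∀ r ∈ Ioo (0:ℝ) ε, P₂ r = (f₂ r - 1)/r^2 ∧ Q₂ r = ρ₂ r / r) ∧
      (∀ r ∈ Ioo (0:ℝ) ε, P₂ r = pOp (-α) (fun s => gE g₀ s (P₂ s) (Q₂ s)) r ∧
        Q₂ r = pOp β (fun s => hE lam ρ₀ s (P₂ s) (Q₂ s)) r) := by
  classical
  set P₂ : ℝ → ℝ := fun s => if s = 0 then -α else (f₂ s - 1)/s^2 with hP₂def
  set Q₂ : ℝ → ℝ := fun s => if s = 0 then β else ρ₂ s / s with hQ₂def
  have hP₂val : ∀ s : ℝ, s ≠ 0 → P₂ s = (f₂ s - 1)/s^2 := fun s hs => if_neg hs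
  have hQ₂val : ∀ s : ℝ, s ≠ 0 → Q₂ s = ρ₂ s / s := fun s hs => if_neg hs
  have hfc : ContinuousOn f₂ (Ioo 0 ε) := hcf.continuousOn
  have hρc : ContinuousOn ρ₂ (Ioo 0 ε) := hcρ.continuousOn
  -- continuity of P₂ on Ico 0 ε
  have hP₂c : ContinuousOn P₂ (Ico 0 ε) := by
    intro s hs
    rcases eq_or_lt_of_le hs.1 with h0 | h0
    · rw [← h0]
      unfold ContinuousWithinAt
      have hval : P₂ 0 = -α := if_pos rfl
      rw [hval]
      have hsplit : Ico (0:ℝ) ε = insert 0 (Ioo 0 ε) := (Set.Ioo_insert_left hε).symm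
      rw [hsplit, ← Set.singleton_union, nhdsWithin_union, tendsto_sup]
      constructor
      · rw [nhdsWithin_singleton]
        have := tendsto_pure_nhds P₂ 0
        rwa [hval] at this
      · rw [nhdsWithin_Ioo_eq_nhdsGT hε]
        have h1 : Tendsto (fun t => (f₂ t - 1 + α*t^2)/t^2 - α) (𝓝[>] (0:ℝ)) (𝓝 (0 - α)) :=
          hasf.sub tendsto_const_nhds
        rw [show (0:ℝ) - α = -α by ring] at h1
        apply h1.congr'
        filter_upwards [self_mem_nhdsWithin] with t ht
        have ht0 : t ≠ 0 := ne_of_gt ht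
        rw [hP₂val t ht0]
        field_simp
        ring
    · apply ContinuousAt.continuousWithinAt
      have hev : P₂ =ᶠ[𝓝 s] (fun t => (f₂ t - 1)/t^2) := by
        filter_upwards [isOpen_Ioo.mem_nhds (⟨h0, hs.2⟩ : s ∈ Ioo (0:ℝ) ε)] with t ht
        exact hP₂val t (ne_of_gt ht.1)
      rw [continuousAt_congr hev]
      apply ContinuousAt.div
      · exact ((hfc.continuousAt (isOpen_Ioo.mem_nhds ⟨h0, hs.2⟩)).sub continuousAt_const)
      · exact (continuous_pow 2).continuousAt
      · exact pow_ne_zero 2 (ne_of_gt h0)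
  have hQ₂c : ContinuousOn Q₂ (Ico 0 ε) := by
    intro s hs
    rcases eq_or_lt_of_le hs.1 with h0 | h0
    · rw [← h0]
      unfold ContinuousWithinAt
      have hval : Q₂ 0 = β := if_pos rfl
      rw [hval]
      have hsplit : Ico (0:ℝ) ε = insert 0 (Ioo 0 ε) := (Set.Ioo_insert_left hε).symm
      rw [hsplit, ← Set.singleton_union, nhdsWithin_union, tendsto_sup]
      constructor
      · rw [nhdsWithin_singleton]
        have := tendsto_pure_nhds Q₂ 0
        rwa [hval] at this
      · rw [nhdsWithin_Ioo_eq_nhdsGT hε]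
        have h1 : Tendsto (fun t => (ρ₂ t - β*t)/t + β) (𝓝[>] (0:ℝ)) (𝓝 (0 + β)) :=
          hasρ.add tendsto_const_nhds
        rw [show (0:ℝ) + β = β by ring] at h1
        apply h1.congr'
        filter_upwards [self_mem_nhdsWithin] with t ht
        have ht0 : t ≠ 0 := ne_of_gt ht
        rw [hQ₂val t ht0]
        field_simp
        ring
    · apply ContinuousAt.continuousWithinAt
      have hev : Q₂ =ᶠ[𝓝 s] (fun t => ρ₂ t / t) := by
        filter_upwards [isOpen_Ioo.mem_nhds (⟨h0, hs.2⟩ : s ∈ Ioo (0:ℝ) ε)] with t ht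
        exact hQ₂val t (ne_of_gt ht.1)
      rw [continuousAt_congr hev]
      apply ContinuousAt.div
      · exact hρc.continuousAt (isOpen_Ioo.mem_nhds ⟨h0, hs.2⟩)
      · exact continuousAt_id
      · exact ne_of_gt h0
  -- the nonlinearities along the solution
  set Φ₂ : ℝ → ℝ := fun s => gE g₀ s (P₂ s) (Q₂ s) with hΦ₂def
  set Ψ₂ : ℝ → ℝ := fun s => hE lam ρ₀ s (P₂ s) (Q₂ s) with hΨ₂def
  have hΦ₂c : ContinuousOn Φ₂ (Ico 0 ε) := gE_cont g₀ lam ρ₀ hP₂c hQ₂c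
  have hΨ₂c : ContinuousOn Ψ₂ (Ico 0 ε) := hE_cont g₀ lam ρ₀ hP₂c hQ₂c
  -- derivative facts for f₂, ρ₂
  have h2eq : (2 : WithTop ℕ∞) = 1 + 1 := by norm_num
  have hdf : ∀ r ∈ Ioo (0:ℝ) ε, HasDerivAt f₂ (deriv f₂ r) r := by
    intro r hr
    exact ((hcf.differentiableOn (by norm_num)).differentiableAt
      (isOpen_Ioo.mem_nhds hr)).hasDerivAt
  have hdρ : ∀ r ∈ Ioo (0:ℝ) ε, HasDerivAt ρ₂ (deriv ρ₂ r) r := by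
    intro r hr
    exact ((hcρ.differentiableOn (by norm_num)).differentiableAt
      (isOpen_Ioo.mem_nhds hr)).hasDerivAt
  have hcf' : ContDiffOn ℝ 1 (deriv f₂) (Ioo 0 ε) := by
    rw [h2eq, contDiffOn_succ_iff_deriv_of_isOpen isOpen_Ioo] at hcf
    exact hcf.2.2
  have hcρ' : ContDiffOn ℝ 1 (deriv ρ₂) (Ioo 0 ε) := by
    rw [h2eq, contDiffOn_succ_iff_deriv_of_isOpen isOpen_Ioo] at hcρ
    exact hcρ.2.2
  have hdf' : ∀ r ∈ Ioo (0:ℝ) ε, HasDerivAt (deriv f₂) (deriv (deriv f₂) r) r := by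
    intro r hr
    exact ((hcf'.differentiableOn (by norm_num)).differentiableAt
      (isOpen_Ioo.mem_nhds hr)).hasDerivAt
  have hdρ' : ∀ r ∈ Ioo (0:ℝ) ε, HasDerivAt (deriv ρ₂) (deriv (deriv ρ₂) r) r := by
    intro r hr
    exact ((hcρ'.differentiableOn (by norm_num)).differentiableAt
      (isOpen_Ioo.mem_nhds hr)).hasDerivAt
  -- second derivative values from the ODE
  have hf2'' : ∀ r ∈ Ioo (0:ℝ) ε,
      deriv (deriv f₂) r = 2*(f₂ r - 1)/r^2 + r^2 * Φ₂ r := by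
    intro r hr
    have hr0 : r ≠ 0 := ne_of_gt hr.1
    have h := (hode r hr).1
    have hΦval : Φ₂ r = gE g₀ r ((f₂ r - 1)/r^2) (ρ₂ r / r) := by
      rw [hΦ₂def]
      simp only
      rw [hP₂val r hr0, hQ₂val r hr0]
    rw [hΦval]
    unfold gE
    have : deriv (deriv f₂) r = ((f₂ r)^2 - 1)/r^2 * f₂ r + g₀^2 * (ρ₂ r)^2 * f₂ r := by
      linarith [h]
    rw [this]
    field_simp
    ring
  have hρ2'' : ∀ r ∈ Ioo (0:ℝ) ε,
      deriv (deriv ρ₂) r = -(2/r) * deriv ρ₂ r + 2*(ρ₂ r)/r^2 + r * Ψ₂ r := by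
    intro r hr
    have hr0 : r ≠ 0 := ne_of_gt hr.1
    have h := (hode r hr).2
    have hΨval : Ψ₂ r = hE lam ρ₀ r ((f₂ r - 1)/r^2) (ρ₂ r / r) := by
      rw [hΨ₂def]
      simp only
      rw [hP₂val r hr0, hQ₂val r hr0]
    rw [hΨval]
    unfold hE
    have : deriv (deriv ρ₂) r = -(2/r) * deriv ρ₂ r + 2*(f₂ r)^2/r^2 * ρ₂ r
        + lam * ((ρ₂ r)^2 - ρ₀^2) * ρ₂ r := by linarith [h]
    rw [this]
    field_simp
    ring
  refine ⟨P₂, Q₂, hP₂c, hQ₂c, fun r hr => ⟨hP₂val r (ne_of_gt hr.1), hQ₂val r (ne_of_gt hr.1)⟩, ?_⟩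
  -- the w-trick for f₂
  set pc : ℝ → ℝ := pOp (-α) Φ₂ with hpcdef
  set qc : ℝ → ℝ := pOp β Ψ₂ with hqcdef
  set w : ℝ → ℝ := fun t => f₂ t - (1 + t^2 * pc t) with hwdef
  set w1 : ℝ → ℝ := fun t => deriv f₂ t - (2*t*pc t + prim Φ₂ 4 t / t^2) with hw1def
  have hw : ∀ r ∈ Ioo (0:ℝ) ε, HasDerivAt w (w1 r) r := by
    intro r hr
    exact (hdf r hr).sub ((keyF1 (-α) hΦ₂c hr).const_add 1)
  have hw1 : ∀ r ∈ Ioo (0:ℝ) ε, HasDerivAt w1 (2 * w r / r^2) r := by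
    intro r hr
    have hr0 : r ≠ 0 := ne_of_gt hr.1
    have H := (hdf' r hr).sub (keyF2 (-α) hΦ₂c hr)
    refine H.congr_deriv ?_
    rw [hf2'' r hr, hwdef]
    simp only
    field_simp
    ring
  have hηF : ∀ r ∈ Ioo (0:ℝ) ε,
      HasDerivAt (fun t => w t / t^2) ((r^2 * w1 r - 2*r*w r) / r^4) r := by
    intro r hr
    have hr0 : r ≠ 0 := ne_of_gt hr.1
    have H := (hw r hr).div (hasDerivAt_pow 2 r) (pow_ne_zero 2 hr0)
    refine H.congr_deriv ?_
    field_simp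
    ring
  have hψF : ∀ r ∈ Ioo (0:ℝ) ε,
      HasDerivAt (fun t => t^2 * w1 t - 2*t*w t) 0 r := by
    intro r hr
    have hr0 : r ≠ 0 := ne_of_gt hr.1
    have H := ((hasDerivAt_pow 2 r).mul (hw1 r hr)).sub
      (((hasDerivAt_id r).const_mul (2:ℝ)).mul (hw r hr))
    refine H.congr_deriv ?_
    simp only [id_eq]
    field_simp
    ring
  have h0F : Tendsto (fun t => w t / t^2) (𝓝[>] (0:ℝ)) (𝓝 0) := by
    have hpc0 : Tendsto pc (𝓝[>] (0:ℝ)) (𝓝 (-α)) := by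
      have h := (pOp_continuousOn (-α) hε hΦ₂c) 0 ⟨le_refl _, hε⟩
      unfold ContinuousWithinAt at h
      rw [pOp_zero] at h
      rw [← nhdsWithin_Ioo_eq_nhdsGT hε]
      exact h.mono_left (nhdsWithin_mono _ Ioo_subset_Ico_self)
    have h1 : Tendsto (fun t => (f₂ t - 1 + α*t^2)/t^2 - (pc t + α)) (𝓝[>] (0:ℝ))
        (𝓝 (0 - (-α + α))) := hasf.sub (hpc0.add tendsto_const_nhds)
    rw [show (0:ℝ) - (-α + α) = 0 by ring] at h1
    apply h1.congr'
    filter_upwards [self_mem_nhdsWithin] with t ht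
    have ht0 : t ≠ 0 := ne_of_gt ht
    rw [hwdef]
    simp only
    field_simp
    ring
  have hvF := vanish hε (fun t => w t / t^2) (fun t => t^2 * w1 t - 2*t*w t) hηF hψF h0F
  -- the w-trick for ρ₂
  set z : ℝ → ℝ := fun t => ρ₂ t - t * qc t with hzdef
  set z1 : ℝ → ℝ := fun t => deriv ρ₂ t - (qc t + prim Ψ₂ 4 t / t^3) with hz1def
  have hz : ∀ r ∈ Ioo (0:ℝ) ε, HasDerivAt z (z1 r) r := by
    intro r hr
    exact (hdρ r hr).sub (keyR1 β hΨ₂c hr)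
  have hz1 : ∀ r ∈ Ioo (0:ℝ) ε,
      HasDerivAt z1 (-(2/r) * z1 r + 2 * z r / r^2) r := by
    intro r hr
    have hr0 : r ≠ 0 := ne_of_gt hr.1
    have H := (hdρ' r hr).sub (keyR2 β hΨ₂c hr)
    refine H.congr_deriv ?_
    rw [hρ2'' r hr, hzdef, hz1def]
    simp only
    field_simp
    ring
  have hηR : ∀ r ∈ Ioo (0:ℝ) ε,
      HasDerivAt (fun t => z t / t) ((r^3 * z1 r - r^2 * z r) / r^4) r := by
    intro r hr
    have hr0 : r ≠ 0 := ne_of_gt hr.1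
    have H := (hz r hr).div (hasDerivAt_id r) hr0
    refine H.congr_deriv ?_
    simp only [id_eq]
    field_simp
  have hψR : ∀ r ∈ Ioo (0:ℝ) ε,
      HasDerivAt (fun t => t^3 * z1 t - t^2 * z t) 0 r := by
    intro r hr
    have hr0 : r ≠ 0 := ne_of_gt hr.1
    have H := ((hasDerivAt_pow 3 r).mul (hz1 r hr)).sub
      ((hasDerivAt_pow 2 r).mul (hz r hr))
    refine H.congr_deriv ?_
    field_simp
    ring
  have h0R : Tendsto (fun t => z t / t) (𝓝[>] (0:ℝ)) (𝓝 0) := by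
    have hqc0 : Tendsto qc (𝓝[>] (0:ℝ)) (𝓝 β) := by
      have h := (pOp_continuousOn β hε hΨ₂c) 0 ⟨le_refl _, hε⟩
      unfold ContinuousWithinAt at h
      rw [pOp_zero] at h
      rw [← nhdsWithin_Ioo_eq_nhdsGT hε]
      exact h.mono_left (nhdsWithin_mono _ Ioo_subset_Ico_self)
    have h1 : Tendsto (fun t => (ρ₂ t - β*t)/t - (qc t - β)) (𝓝[>] (0:ℝ))
        (𝓝 (0 - (β - β))) := hasρ.sub (hqc0.sub tendsto_const_nhds)
    rw [show (0:ℝ) - (β - β) = 0 by ring] at h1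
    apply h1.congr'
    filter_upwards [self_mem_nhdsWithin] with t ht
    have ht0 : t ≠ 0 := ne_of_gt ht
    rw [hzdef]
    simp only
    field_simp
    ring
  have hvR := vanish hε (fun t => z t / t) (fun t => t^3 * z1 t - t^2 * z t) hηR hψR h0R
  intro r hr
  have hr0 : r ≠ 0 := ne_of_gt hr.1
  constructor
  · have h := hvF r hr
    have hw0 : w r = 0 := by
      have h' : w r / r^2 = 0 := h
      have h2 : w r / r^2 * r^2 = 0 := by rw [h']; ring
      rwa [div_mul_cancel₀ _ (pow_ne_zero 2 hr0)] at h2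
    rw [hP₂val r hr0]
    have : f₂ r - (1 + r^2 * pc r) = 0 := hw0
    rw [hpcdef] at this
    field_simp
    linarith [this]
  · have h := hvR r hr
    have hz0 : z r = 0 := by
      have h' : z r / r = 0 := h
      have h2 : z r / r * r = 0 := by rw [h']; ring
      rwa [div_mul_cancel₀ _ hr0] at h2
    rw [hQ₂val r hr0]
    have : ρ₂ r - r * qc r = 0 := hz0
    rw [hqcdef] at this
    field_simp
    linarith [this]

theorem stmt15 (α β g₀ lam ρ₀ : ℝ) (hg : 0 < g₀) (hlam : 0 < lam) (hρ₀ : 0 < ρ₀) :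
    ∃ ε > (0 : ℝ), ∃ f ρ : ℝ → ℝ,
      (ContDiffOn ℝ 2 f (Ioo 0 ε) ∧ ContDiffOn ℝ 2 ρ (Ioo 0 ε) ∧
        (∀ r ∈ Ioo (0 : ℝ) ε,
          deriv (deriv f) r - (((f r) ^ 2 - 1) / r ^ 2) * f r
            = g₀ ^ 2 * (ρ r) ^ 2 * f r ∧
          deriv (deriv ρ) r + (2 / r) * deriv ρ r - (2 * (f r) ^ 2 / r ^ 2) * ρ r
            = lam * ((ρ r) ^ 2 - ρ₀ ^ 2) * ρ r) ∧
        Tendsto (fun r => (f r - 1 + α * r ^ 2) / r ^ 2) (nhdsWithin 0 (Ioi 0)) (nhds 0) ∧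
        Tendsto (fun r => (ρ r - β * r) / r) (nhdsWithin 0 (Ioi 0)) (nhds 0)) ∧
      (∀ f₂ ρ₂ : ℝ → ℝ,
        (ContDiffOn ℝ 2 f₂ (Ioo 0 ε) ∧ ContDiffOn ℝ 2 ρ₂ (Ioo 0 ε) ∧
          (∀ r ∈ Ioo (0 : ℝ) ε,
            deriv (deriv f₂) r - (((f₂ r) ^ 2 - 1) / r ^ 2) * f₂ r
              = g₀ ^ 2 * (ρ₂ r) ^ 2 * f₂ r ∧
            deriv (deriv ρ₂) r + (2 / r) * deriv ρ₂ r
              - (2 * (f₂ r) ^ 2 / r ^ 2) * ρ₂ r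
              = lam * ((ρ₂ r) ^ 2 - ρ₀ ^ 2) * ρ₂ r) ∧
          Tendsto (fun r => (f₂ r - 1 + α * r ^ 2) / r ^ 2) (nhdsWithin 0 (Ioi 0)) (nhds 0) ∧
          Tendsto (fun r => (ρ₂ r - β * r) / r) (nhdsWithin 0 (Ioi 0)) (nhds 0)) →
        EqOn f f₂ (Ioo 0 ε) ∧ EqOn ρ ρ₂ (Ioo 0 ε)) := by
  
  obtain ⟨ε, hε, hε1, P, Q, hPc, hQc, hfix⟩ := exists_fixed α β g₀ lam ρ₀
  set Φ : ℝ → ℝ := fun s => gE g₀ s (P s) (Q s) with hΦdef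
  set Ψ : ℝ → ℝ := fun s => hE lam ρ₀ s (P s) (Q s) with hΨdef
  have hΦc : ContinuousOn Φ (Ico 0 (ε+1)) :=
    gE_cont g₀ lam ρ₀ hPc.continuousOn hQc.continuousOn
  have hΨc : ContinuousOn Ψ (Ico 0 (ε+1)) :=
    hE_cont g₀ lam ρ₀ hPc.continuousOn hQc.continuousOn
  set f : ℝ → ℝ := fun r => 1 + r^2 * pOp (-α) Φ r with hfdef
  set ρf : ℝ → ℝ := fun r => r * pOp β Ψ r with hρfdef
  have hb1 : (0:ℝ) < ε + 1 := by linarith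
  have hsub : Ioo (0:ℝ) ε ⊆ Ioo 0 (ε+1) := fun x hx => ⟨hx.1, by linarith [hx.2]⟩
  -- derivative facts for f
  have hfd : ∀ r ∈ Ioo (0:ℝ) (ε+1),
      HasDerivAt f (2*r*pOp (-α) Φ r + prim Φ 4 r / r^2) r :=
    fun r hr => (keyF1 (-α) hΦc hr).const_add 1
  have hfd' : ∀ r ∈ Ioo (0:ℝ) (ε+1),
      HasDerivAt (fun t => 2*t*pOp (-α) Φ t + prim Φ 4 t / t^2)
      (2*(r^2*pOp (-α) Φ r)/r^2 + r^2*Φ r) r := fun r hr => keyF2 (-α) hΦc hr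
  have hderivf : ∀ r ∈ Ioo (0:ℝ) (ε+1),
      deriv f r = 2*r*pOp (-α) Φ r + prim Φ 4 r / r^2 := fun r hr => (hfd r hr).deriv
  have hevf : ∀ r ∈ Ioo (0:ℝ) (ε+1),
      deriv f =ᶠ[𝓝 r] (fun t => 2*t*pOp (-α) Φ t + prim Φ 4 t / t^2) := by
    intro r hr
    filter_upwards [isOpen_Ioo.mem_nhds hr] with t ht
    exact hderivf t ht
  have hdd_f : ∀ r ∈ Ioo (0:ℝ) (ε+1),
      deriv (deriv f) r = 2*(r^2*pOp (-α) Φ r)/r^2 + r^2*Φ r := by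
    intro r hr
    rw [(hevf r hr).deriv_eq]
    exact (hfd' r hr).deriv
  -- derivative facts for ρf
  have hρd : ∀ r ∈ Ioo (0:ℝ) (ε+1),
      HasDerivAt ρf (pOp β Ψ r + prim Ψ 4 r / r^3) r := fun r hr => keyR1 β hΨc hr
  have hρd' : ∀ r ∈ Ioo (0:ℝ) (ε+1),
      HasDerivAt (fun t => pOp β Ψ t + prim Ψ 4 t / t^3)
      (r*Ψ r - 2*(prim Ψ 4 r)/r^4) r := fun r hr => keyR2 β hΨc hr
  have hderivρ : ∀ r ∈ Ioo (0:ℝ) (ε+1),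
      deriv ρf r = pOp β Ψ r + prim Ψ 4 r / r^3 := fun r hr => (hρd r hr).deriv
  have hevρ : ∀ r ∈ Ioo (0:ℝ) (ε+1),
      deriv ρf =ᶠ[𝓝 r] (fun t => pOp β Ψ t + prim Ψ 4 t / t^3) := by
    intro r hr
    filter_upwards [isOpen_Ioo.mem_nhds hr] with t ht
    exact hderivρ t ht
  have hdd_ρ : ∀ r ∈ Ioo (0:ℝ) (ε+1),
      deriv (deriv ρf) r = r*Ψ r - 2*(prim Ψ 4 r)/r^4 := by
    intro r hr
    rw [(hevρ r hr).deriv_eq]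
    exact (hρd' r hr).deriv
  -- continuity of the building blocks on the open interval
  have hpopf : ContinuousOn (pOp (-α) Φ) (Ioo 0 (ε+1)) :=
    fun r hr => ((pOp_hasDerivAt (-α) hΦc hr).continuousAt).continuousWithinAt
  have hprimf : ContinuousOn (prim Φ 4) (Ioo 0 (ε+1)) :=
    fun r hr => ((prim_hasDerivAt hΦc 4 hr).continuousAt).continuousWithinAt
  have hpopρ : ContinuousOn (pOp β Ψ) (Ioo 0 (ε+1)) :=
    fun r hr => ((pOp_hasDerivAt β hΨc hr).continuousAt).continuousWithinAt
  have hprimρ : ContinuousOn (prim Ψ 4) (Ioo 0 (ε+1)) :=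
    fun r hr => ((prim_hasDerivAt hΨc 4 hr).continuousAt).continuousWithinAt
  have hΦoo : ContinuousOn Φ (Ioo 0 (ε+1)) := hΦc.mono Ioo_subset_Ico_self
  have hΨoo : ContinuousOn Ψ (Ioo 0 (ε+1)) := hΨc.mono Ioo_subset_Ico_self
  have hsub' : Ioo (0:ℝ) ε ⊆ Ioo 0 (ε+1) := hsub
  refine ⟨ε, hε, f, ρf, ⟨?_, ?_, ?_, ?_, ?_⟩, ?_⟩
  · -- ContDiffOn 2 f
    rw [show (2 : WithTop ℕ∞) = 1+1 by norm_num,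
      contDiffOn_succ_iff_deriv_of_isOpen isOpen_Ioo]
    refine ⟨fun r hr => ((hfd r (hsub hr)).differentiableAt).differentiableWithinAt,
      by intro h; simp at h, ?_⟩
    rw [show (1 : WithTop ℕ∞) = 0+1 by norm_num,
      contDiffOn_succ_iff_deriv_of_isOpen isOpen_Ioo]
    refine ⟨?_, by intro h; simp at h, ?_⟩
    · intro r hr
      have hDA : DifferentiableAt ℝ (deriv f) r := by
        rw [Filter.EventuallyEq.differentiableAt_iff (hevf r (hsub hr))]
        exact (hfd' r (hsub hr)).differentiableAt
      exact hDA.differentiableWithinAt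
    · rw [contDiffOn_zero]
      refine ContinuousOn.congr ?_ (fun r hr => hdd_f r (hsub hr))
      · apply ContinuousOn.add
        · apply ContinuousOn.div
          · exact (continuousOn_const.mul (((continuous_pow 2).continuousOn).mul
              (hpopf.mono hsub)))
          · exact (continuous_pow 2).continuousOn
          · exact fun r hr => pow_ne_zero 2 (ne_of_gt hr.1)
        · exact ((continuous_pow 2).continuousOn).mul (hΦoo.mono hsub)
  · -- ContDiffOn 2 ρf
    rw [show (2 : WithTop ℕ∞) = 1+1 by norm_num,
      contDiffOn_succ_iff_deriv_of_isOpen isOpen_Ioo]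
    refine ⟨fun r hr => ((hρd r (hsub hr)).differentiableAt).differentiableWithinAt,
      by intro h; simp at h, ?_⟩
    rw [show (1 : WithTop ℕ∞) = 0+1 by norm_num,
      contDiffOn_succ_iff_deriv_of_isOpen isOpen_Ioo]
    refine ⟨?_, by intro h; simp at h, ?_⟩
    · intro r hr
      have hDA : DifferentiableAt ℝ (deriv ρf) r := by
        rw [Filter.EventuallyEq.differentiableAt_iff (hevρ r (hsub hr))]
        exact (hρd' r (hsub hr)).differentiableAt
      exact hDA.differentiableWithinAt
    · rw [contDiffOn_zero]
      refine ContinuousOn.congr ?_ (fun r hr => hdd_ρ r (hsub hr))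
      · apply ContinuousOn.sub
        · exact (continuous_id.continuousOn).mul (hΨoo.mono hsub)
        · apply ContinuousOn.div
          · exact continuousOn_const.mul (hprimρ.mono hsub)
          · exact (continuous_pow 4).continuousOn
          · exact fun r hr => pow_ne_zero 4 (ne_of_gt hr.1)
  · -- the ODE system
    intro r hr
    have hr' := hsub hr
    have hr0 : r ≠ 0 := ne_of_gt hr.1
    have hPr := (hfix r (Ioo_subset_Icc_self hr)).1
    have hQr := (hfix r (Ioo_subset_Icc_self hr)).2
    have hΦr : Φ r = gE g₀ r (P r) (Q r) := rfl
    have hΨr : Ψ r = hE lam ρ₀ r (P r) (Q r) := rfl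
    constructor
    · rw [hdd_f r hr']
      simp only [hfdef, hρfdef]
      rw [hΦr, hPr, hQr]
      unfold gE
      field_simp
      ring
    · rw [hdd_ρ r hr', hderivρ r hr']
      simp only [hfdef, hρfdef]
      rw [hΨr, hPr, hQr]
      unfold hE
      field_simp
      ring
  · -- asymptotics for f
    have hp0 : Tendsto (pOp (-α) Φ) (𝓝[>] (0:ℝ)) (𝓝 (-α)) := by
      have h := (pOp_continuousOn (-α) hb1 hΦc) 0 ⟨le_refl _, hb1⟩
      unfold ContinuousWithinAt at h
      rw [pOp_zero] at h
      rw [← nhdsWithin_Ioo_eq_nhdsGT hb1]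
      exact h.mono_left (nhdsWithin_mono _ Ioo_subset_Ico_self)
    have h1 : Tendsto (fun r => pOp (-α) Φ r + α) (𝓝[>] (0:ℝ)) (𝓝 (-α + α)) :=
      hp0.add tendsto_const_nhds
    rw [show -α + α = (0:ℝ) by ring] at h1
    apply h1.congr'
    filter_upwards [self_mem_nhdsWithin] with t ht
    have ht0 : t ≠ 0 := ne_of_gt ht
    simp only [hfdef]
    field_simp
    ring
  · -- asymptotics for ρ
    have hq0 : Tendsto (pOp β Ψ) (𝓝[>] (0:ℝ)) (𝓝 β) := by
      have h := (pOp_continuousOn β hb1 hΨc) 0 ⟨le_refl _, hb1⟩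
      unfold ContinuousWithinAt at h
      rw [pOp_zero] at h
      rw [← nhdsWithin_Ioo_eq_nhdsGT hb1]
      exact h.mono_left (nhdsWithin_mono _ Ioo_subset_Ico_self)
    have h1 : Tendsto (fun r => pOp β Ψ r - β) (𝓝[>] (0:ℝ)) (𝓝 (β - β)) :=
      hq0.sub tendsto_const_nhds
    rw [show β - β = (0:ℝ) by ring] at h1
    apply h1.congr'
    filter_upwards [self_mem_nhdsWithin] with t ht
    have ht0 : t ≠ 0 := ne_of_gt ht
    simp only [hρfdef]
    field_simp
  · -- uniqueness
    intro f₂ ρ₂ h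
    obtain ⟨hcf2, hcρ2, hode2, hasf2, hasρ2⟩ := h
    obtain ⟨P₂, Q₂, hP₂c, hQ₂c, hPQval, hint⟩ :=
      sol_to_int α β g₀ lam ρ₀ hε f₂ ρ₂ hcf2 hcρ2 hode2 hasf2 hasρ2
    have huni := uniq_int α β g₀ lam ρ₀ hε hε1 P Q P₂ Q₂
      hPc.continuousOn hQc.continuousOn hP₂c hQ₂c
      (fun r hr => hfix r (Ioo_subset_Icc_self hr)) hint
    constructor
    · intro r hr
      have hr0 : r ≠ 0 := ne_of_gt hr.1
      have h1 := (huni r hr).1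
      have h2 := (hPQval r hr).1
      have h3 := (hfix r (Ioo_subset_Icc_self hr)).1
      show f r = f₂ r
      simp only [hfdef]
      rw [← h3, h1, h2]
      field_simp
      ring
    · intro r hr
      have hr0 : r ≠ 0 := ne_of_gt hr.1
      have h1 := (huni r hr).2
      have h2 := (hPQval r hr).2
      have h3 := (hfix r (Ioo_subset_Icc_self hr)).2
      show ρf r = ρ₂ r
      simp only [hρfdef]
      rw [← h3, h1, h2]
      field_simp
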